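/- Let ζ₁,…,ζ_D be independent real-valued random variables on a probability space, each with mean zero and taking values in [−1,1] almost surely. Let b̄ ∈ ℝ^D, ρ₂ ≥ 0, F ∈ ℝ^D with F_j ≥ 0, and define the random cost vector b(ζ) with components b(ζ)_j = b̄_j + ζ_j ρ₂ F_j. Define f(x,y,z;b) = q Σ_{k,i,j} t_{ijk} x_{ijk} + q Σ_j b_j y_j − αq Σ_{k,i,j} t_{ijk}(x_{ijk} − z_{ijk}) with q ≥ 0. Let Ω ≥ 0 and suppose (w, x, y, z) satisfies the second-order cone constraint w − f(x,y,z;b̄) ≥ Ω·√(Σ_{j=1}^D (q ρ₂ F_j y_j)²). Then Prob{ w ≥ f(x,y,z;b(ζ)) } ≥ 1 − e^{−Ω²/2}. -/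

import Mathlib

open MeasureTheory ProbabilityTheory

open scoped ENNReal

lemma exp_mul_le_of_mem_Icc {u x : ℝ} (hx : x ∈ Set.Icc (-1 : ℝ) 1) :
    Real.exp (u * x) ≤ Real.cosh u + x * Real.sinh u := by
  have ha : (0:ℝ) ≤ (1 - x) / 2 := by linarith [hx.2]
  have hb : (0:ℝ) ≤ (1 + x) / 2 := by linarith [hx.1]
  have hab : (1 - x) / 2 + (1 + x) / 2 = 1 := by ring
  have h := convexOn_exp.2 (Set.mem_univ (-u)) (Set.mem_univ u) ha hb hab
  simp only [smul_eq_mul] at h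
  have h1 : (1 - x) / 2 * (-u) + (1 + x) / 2 * u = u * x := by ring
  rw [h1] at h
  refine h.trans (le_of_eq ?_)
  rw [Real.cosh_eq, Real.sinh_eq]
  ring

lemma integral_exp_mul_le {Ωs : Type*} [MeasurableSpace Ωs] (μ : Measure Ωs)
    [IsProbabilityMeasure μ] (ξ : Ωs → ℝ) (hm : Measurable ξ)
    (hmean : ∫ ω, ξ ω ∂μ = 0) (hbdd : ∀ᵐ ω ∂μ, ξ ω ∈ Set.Icc (-1 : ℝ) 1) (u : ℝ) :
    ∫ ω, Real.exp (u * ξ ω) ∂μ ≤ Real.exp (u ^ 2 / 2) := by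
  have hξint : Integrable ξ μ := by
    refine (integrable_const (1:ℝ)).mono' hm.aestronglyMeasurable ?_
    filter_upwards [hbdd] with ω h
    rw [Real.norm_eq_abs, abs_le]; exact ⟨h.1, h.2⟩
  have hint : Integrable (fun ω => Real.exp (u * ξ ω)) μ := by
    refine (integrable_const (Real.exp |u|)).mono'
      ((hm.const_mul u).exp).aestronglyMeasurable ?_
    filter_upwards [hbdd] with ω h
    rw [Real.norm_eq_abs, abs_of_pos (Real.exp_pos _), Real.exp_le_exp]
    calc u * ξ ω ≤ |u * ξ ω| := le_abs_self _
      _ = |u| * |ξ ω| := abs_mul _ _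
      _ ≤ |u| * 1 := by gcongr; rw [abs_le]; exact ⟨h.1, h.2⟩
      _ = |u| := mul_one _
  calc ∫ ω, Real.exp (u * ξ ω) ∂μ
      ≤ ∫ ω, (Real.cosh u + ξ ω * Real.sinh u) ∂μ := by
        refine integral_mono_ae hint ((integrable_const _).add (hξint.mul_const _)) ?_
        filter_upwards [hbdd] with ω h using exp_mul_le_of_mem_Icc h
    _ = Real.cosh u := by
        rw [integral_add (integrable_const _) (hξint.mul_const _), integral_const,
          integral_mul_const, hmean, probReal_univ]
        simp
    _ ≤ Real.exp (u ^ 2 / 2) := Real.cosh_le_exp_half_sq u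

/-- Total cost `f(x,y,z;b)` of the supply planning problem. -/
noncomputable def supplyCost {K : Type*} [Fintype K] {O : K → Type*} [∀ k, Fintype (O k)]
    {D : ℕ} (t : ∀ k, O k → Fin D → ℝ) (q α : ℝ)
    (x : ∀ k, O k → Fin D → ℝ) (y : Fin D → ℝ) (z : ∀ k, O k → Fin D → ℝ)
    (b : Fin D → ℝ) : ℝ :=
  q * ∑ k, ∑ i, ∑ j, t k i j * x k i j + q * ∑ j, b j * y j
    - α * q * ∑ k, ∑ i, ∑ j, t k i j * (x k i j - z k i j)

/-- Probability guarantee for the RO-ell model: a feasible solution of the robust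
problem with ellipsoidal cost uncertainty satisfies the cost constraint with
probability at least `1 - exp(-Ω²/2)`, for any distribution of `ζ` with
independent zero-mean coordinates in `[-1,1]` a.s. -/
theorem stmt_14 {Ωs : Type*} [MeasurableSpace Ωs] (μ : Measure Ωs)
    [IsProbabilityMeasure μ] {D : ℕ} (ζ : Fin D → Ωs → ℝ)
    (hmeas : ∀ j, Measurable (ζ j))
    (hindep : iIndepFun ζ μ)
    (hmean : ∀ j, ∫ ω, ζ j ω ∂μ = 0)
    (hbdd : ∀ j, ∀ᵐ ω ∂μ, ζ j ω ∈ Set.Icc (-1 : ℝ) 1)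
    {K : Type*} [Fintype K] {O : K → Type*} [∀ k, Fintype (O k)]
    (t : ∀ k, O k → Fin D → ℝ) (q α ρ₂ : ℝ) (hq : 0 ≤ q) (hρ₂ : 0 ≤ ρ₂)
    (bbar F : Fin D → ℝ) (hF : ∀ j, 0 ≤ F j) (Om : ℝ) (hOm : 0 ≤ Om)
    (w : ℝ) (x z : ∀ k, O k → Fin D → ℝ) (y : Fin D → ℝ)
    (hsocc : Om * Real.sqrt (∑ j, (q * ρ₂ * F j * y j) ^ 2) ≤
      w - supplyCost t q α x y z bbar) :
    1 - ENNReal.ofReal (Real.exp (-Om ^ 2 / 2)) ≤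
      μ {ω | supplyCost t q α x y z (fun j => bbar j + ζ j ω * (ρ₂ * F j)) ≤ w} := by
  classical
  set a : Fin D → ℝ := fun j => q * ρ₂ * F j * y j with ha
  set c : ℝ := w - supplyCost t q α x y z bbar with hc
  -- rewrite random cost
  have key : ∀ ω, supplyCost t q α x y z (fun j => bbar j + ζ j ω * (ρ₂ * F j))
      = supplyCost t q α x y z bbar + ∑ j, a j * ζ j ω := by
    intro ω
    simp only [supplyCost, ha]
    have : (∑ j, (bbar j + ζ j ω * (ρ₂ * F j)) * y j)
        = (∑ j, bbar j * y j) + ∑ j, ζ j ω * (ρ₂ * F j) * y j := by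
      rw [← Finset.sum_add_distrib]
      exact Finset.sum_congr rfl fun j _ => by ring
    rw [this]
    have h2 : (∑ j, q * ρ₂ * F j * y j * ζ j ω)
        = q * ∑ j, ζ j ω * (ρ₂ * F j) * y j := by
      rw [Finset.mul_sum]
      exact Finset.sum_congr rfl fun j _ => by ring
    rw [h2]; ring
  set Xf : Fin D → Ωs → ℝ := fun j ω => a j * ζ j ω with hXf
  have hXmeas : ∀ j, Measurable (Xf j) := fun j => (hmeas j).const_mul _
  have hSmeas : Measurable fun ω => ∑ j, a j * ζ j ω :=
    Finset.measurable_sum _ fun j _ => hXmeas j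
  set E : Set Ωs := {ω | supplyCost t q α x y z
      (fun j => bbar j + ζ j ω * (ρ₂ * F j)) ≤ w} with hE
  have hEmeas : MeasurableSet E := by
    have : E = {ω | (∑ j, a j * ζ j ω) ≤ c} := by
      ext ω; simp only [hE, Set.mem_setOf_eq, key ω, hc]; constructor <;> intro h <;> linarith
    rw [this]
    exact measurableSet_le hSmeas measurable_const
  have hc0 : 0 ≤ c := le_trans (mul_nonneg hOm (Real.sqrt_nonneg _)) hsocc
  -- tail bound
  have tail : μ Eᶜ ≤ ENNReal.ofReal (Real.exp (-Om ^ 2 / 2)) := by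
    have hsub : Eᶜ ⊆ {ω | c < (∑ j ∈ Finset.univ, Xf j) ω} := by
      intro ω hω
      simp only [hE, Set.mem_compl_iff, Set.mem_setOf_eq, not_le, key ω] at hω
      simp only [Set.mem_setOf_eq, Finset.sum_apply, hXf]
      linarith
    refine le_trans (measure_mono hsub) ?_
    by_cases hσ : (∑ j, a j ^ 2) = 0
    · -- all a j = 0
      have haj : ∀ j, a j = 0 := by
        intro j
        have := (Finset.sum_eq_zero_iff_of_nonneg
          (fun j _ => sq_nonneg (a j))).1 hσ j (Finset.mem_univ j)
        exact pow_eq_zero_iff (two_ne_zero) |>.1 this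
      have hempty : {ω | c < (∑ j ∈ Finset.univ, Xf j) ω} = ∅ := by
        ext ω
        simp only [Set.mem_setOf_eq, Finset.sum_apply, hXf, Set.mem_empty_iff_false,
          iff_false, not_lt]
        simp [haj]; linarith
      rw [hempty]
      simp
    · have hmono : {ω | c < (∑ j ∈ Finset.univ, Xf j) ω}
          ⊆ {ω | c ≤ (∑ j ∈ Finset.univ, Xf j) ω} := Set.setOf_subset_setOf.2 fun ω h => le_of_lt h

      refine le_trans (measure_mono hmono) ?_
      have hσpos : 0 < ∑ j, a j ^ 2 :=
        lt_of_le_of_ne (Finset.sum_nonneg fun j _ => sq_nonneg _) (Ne.symm hσ)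
      set σ : ℝ := Real.sqrt (∑ j, a j ^ 2) with hσdef
      have hσp : 0 < σ := Real.sqrt_pos.2 hσpos
      set s : ℝ := Om / σ with hs
      have hs0 : 0 ≤ s := div_nonneg hOm hσp.le
      have hindep' : iIndepFun Xf μ :=
        hindep.comp (fun j r => a j * r) (fun j => measurable_const.mul measurable_id)
      have hint : ∀ j, Integrable (fun ω => Real.exp (s * Xf j ω)) μ := by
        intro j
        refine (integrable_const (Real.exp |s * a j|)).mono'
          (((hXmeas j).const_mul s).exp).aestronglyMeasurable ?_
        filter_upwards [hbdd j] with ω h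
        rw [Real.norm_eq_abs, abs_of_pos (Real.exp_pos _), Real.exp_le_exp, hXf]
        calc s * (a j * ζ j ω) = (s * a j) * ζ j ω := by ring
          _ ≤ |(s * a j) * ζ j ω| := le_abs_self _
          _ = |s * a j| * |ζ j ω| := abs_mul _ _
          _ ≤ |s * a j| * 1 := by gcongr; rw [abs_le]; exact ⟨h.1, h.2⟩
          _ = |s * a j| := mul_one _
      have hintS : Integrable (fun ω => Real.exp (s * (∑ j ∈ Finset.univ, Xf j) ω)) μ :=
        hindep'.integrable_exp_mul_sum hXmeas fun j _ => hint j
      have chern := measure_ge_le_exp_mul_mgf (X := ∑ j ∈ Finset.univ, Xf j) (μ := μ)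
        (t := s) c hs0 hintS
      have hmgf : mgf (∑ j ∈ Finset.univ, Xf j) μ s ≤ Real.exp (s ^ 2 * (∑ j, a j ^ 2) / 2) := by
        rw [hindep'.mgf_sum hXmeas]
        calc ∏ j, mgf (Xf j) μ s ≤ ∏ j, Real.exp ((s * a j) ^ 2 / 2) := by
              refine Finset.prod_le_prod (fun j _ => mgf_nonneg) fun j _ => ?_
              have : mgf (Xf j) μ s = ∫ ω, Real.exp ((s * a j) * ζ j ω) ∂μ := by
                simp only [mgf, hXf]
                exact integral_congr_ae (Filter.Eventually.of_forall fun ω => by ring_nf)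
              rw [this]
              exact integral_exp_mul_le μ (ζ j) (hmeas j) (hmean j) (hbdd j) _
          _ = Real.exp (∑ j, (s * a j) ^ 2 / 2) := by rw [← Real.exp_sum]
          _ = Real.exp (s ^ 2 * (∑ j, a j ^ 2) / 2) := by
              congr 1
              rw [Finset.mul_sum, Finset.sum_div]
              exact Finset.sum_congr rfl fun j _ => by ring
      have hσsq : σ * σ = ∑ j, a j ^ 2 := Real.mul_self_sqrt hσpos.le
      have hsσ : s * σ = Om := div_mul_cancel₀ Om hσp.ne'
      have hcσ : Om * σ ≤ c := hsocc
      have harith : Real.exp (-s * c) * Real.exp (s ^ 2 * (∑ j, a j ^ 2) / 2)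
          ≤ Real.exp (-Om ^ 2 / 2) := by
        rw [← Real.exp_add, Real.exp_le_exp]
        have h1 : s * (Om * σ) ≤ s * c := mul_le_mul_of_nonneg_left hcσ hs0
        have h2 : s ^ 2 * (∑ j, a j ^ 2) = Om ^ 2 := by
          rw [← hσsq]; nlinarith [hsσ]
        nlinarith [hsσ]
      have : (μ {ω | c ≤ (∑ j ∈ Finset.univ, Xf j) ω}).toReal ≤ Real.exp (-Om ^ 2 / 2) := by
        refine chern.trans (le_trans ?_ harith)
        exact mul_le_mul_of_nonneg_left hmgf (Real.exp_pos _).le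
      calc μ {ω | c ≤ (∑ j ∈ Finset.univ, Xf j) ω}
          = ENNReal.ofReal (μ {ω | c ≤ (∑ j ∈ Finset.univ, Xf j) ω}).toReal :=
            (ENNReal.ofReal_toReal (measure_ne_top _ _)).symm
        _ ≤ ENNReal.ofReal (Real.exp (-Om ^ 2 / 2)) := ENNReal.ofReal_le_ofReal this
  -- conclude
  rw [tsub_le_iff_right]
  calc (1 : ℝ≥0∞) = μ E + μ Eᶜ := by
        rw [measure_add_measure_compl hEmeas, measure_univ]
    _ ≤ μ E + ENNReal.ofReal (Real.exp (-Om ^ 2 / 2)) := add_le_add_right tail _
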